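/- Let 1/2 < p < 1 and let λ_p be the Borel probability measure on [0,1) determined by λ_p([Σ_{k=1}^n e_k 2^{−k}, Σ_{k=1}^n e_k 2^{−k} + 2^{−n})) = p^{Σ_{k=1}^n e_k} (1−p)^{Σ_{k=1}^n (1−e_k)} for all n ∈ ℕ and all digits e_k ∈ {0,1}. Define f(x) = λ_p([0, x)) for x ∈ [0,1]. Then for all x, y ∈ [0,1], |f(x) − f(y)| ≤ 3|x − y|^{α}, where α = −log₂ p; that is, the distribution function of λ_p is 3-Hölder with exponent −log₂ p. -/

import Mathlib

open MeasureTheory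

noncomputable section

private lemma digits_exist : ∀ (n m : ℕ), m < 2 ^ n →
    ∃ e : Fin n → Fin 2, ∑ k : Fin n, (e k : ℕ) * 2 ^ (n - 1 - (k : ℕ)) = m := by
  intro n
  induction n with
  | zero =>
    intro m hm
    interval_cases m
    exact ⟨Fin.elim0, by simp⟩
  | succ n ih =>
    intro m hm
    obtain ⟨e', he'⟩ := ih (m / 2) (by omega)
    refine ⟨Fin.snoc e' ⟨m % 2, by omega⟩, ?_⟩
    rw [Fin.sum_univ_castSucc]
    simp only [Fin.snoc_castSucc, Fin.snoc_last, Fin.val_last, Fin.coe_castSucc]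
    have h1 : ∀ k : Fin n, (e' k : ℕ) * 2 ^ (n + 1 - 1 - (k : ℕ))
        = 2 * ((e' k : ℕ) * 2 ^ (n - 1 - (k : ℕ))) := by
      intro k
      have hk : n + 1 - 1 - (k : ℕ) = (n - 1 - (k : ℕ)) + 1 := by omega
      rw [hk, pow_succ]
      ring
    rw [Finset.sum_congr rfl (fun k _ => h1 k), ← Finset.mul_sum, he']
    simp only [Nat.add_sub_cancel, Nat.sub_self, pow_zero, mul_one]
    omega

private lemma cyl_mass (p : ℝ) (hp1 : 1 / 2 < p) (hp2 : p < 1)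
    (μ : Measure ℝ)
    (hμ : ∀ n : ℕ, ∀ e : Fin n → Fin 2,
      μ (Set.Ico (∑ k : Fin n, ((e k : ℕ) : ℝ) * ((2 : ℝ) ^ ((k : ℕ) + 1))⁻¹)
          ((∑ k : Fin n, ((e k : ℕ) : ℝ) * ((2 : ℝ) ^ ((k : ℕ) + 1))⁻¹) + ((2 : ℝ) ^ n)⁻¹))
        = ENNReal.ofReal
            (p ^ (∑ k : Fin n, (e k : ℕ)) * (1 - p) ^ (n - ∑ k : Fin n, (e k : ℕ))))
    (n m : ℕ) (hm : m < 2 ^ n) :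
    μ (Set.Ico ((m : ℝ) / 2 ^ n) (((m : ℝ) + 1) / 2 ^ n)) ≤ ENNReal.ofReal (p ^ n) := by
  obtain ⟨e, he⟩ := digits_exist n m hm
  have hp0 : (0 : ℝ) < p := by linarith
  have hsum : ∑ k : Fin n, ((e k : ℕ) : ℝ) * ((2 : ℝ) ^ ((k : ℕ) + 1))⁻¹ = (m : ℝ) / 2 ^ n := by
    have hterm : ∀ k : Fin n, ((e k : ℕ) : ℝ) * ((2 : ℝ) ^ ((k : ℕ) + 1))⁻¹
        = (((e k : ℕ) * 2 ^ (n - 1 - (k : ℕ)) : ℕ) : ℝ) / 2 ^ n := by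
      intro k
      have hk : (k : ℕ) + 1 + (n - 1 - (k : ℕ)) = n := by
        have := k.isLt; omega
      push_cast
      rw [show (2 : ℝ) ^ n = 2 ^ ((k : ℕ) + 1) * 2 ^ (n - 1 - (k : ℕ)) by
        rw [← pow_add, hk]]
      have h1 : ((2 : ℝ) ^ ((k : ℕ) + 1)) ≠ 0 := by positivity
      have h2 : ((2 : ℝ) ^ (n - 1 - (k : ℕ))) ≠ 0 := by positivity
      field_simp
    rw [Finset.sum_congr rfl (fun k _ => hterm k), ← Finset.sum_div, ← Nat.cast_sum, he]
  have h1 : ((m : ℝ) + 1) / 2 ^ n = (m : ℝ) / 2 ^ n + ((2 : ℝ) ^ n)⁻¹ := by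
    field_simp
  rw [h1, ← hsum]
  rw [hμ n e]
  apply ENNReal.ofReal_le_ofReal
  set s := ∑ k : Fin n, (e k : ℕ) with hs
  have hsn : s ≤ n := by
    calc s ≤ ∑ _k : Fin n, 1 := Finset.sum_le_sum (fun k _ => by omega)
    _ = n := by simp
  calc p ^ s * (1 - p) ^ (n - s) ≤ p ^ s * p ^ (n - s) := by
        apply mul_le_mul_of_nonneg_left _ (by positivity)
        apply pow_le_pow_left₀ (by linarith) (by linarith)
    _ = p ^ n := by rw [← pow_add]; congr 1; omega

/-- Let `1/2 < p < 1` and let `λ_p` be a Borel measure on `ℝ`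
assigning to each binary cylinder interval of generation `n` (determined by digits
`e₁, …, e_n ∈ {0,1}`) the mass `p^{Σ e_k} (1−p)^{Σ (1−e_k)}`. Then the distribution
function `f(x) = λ_p([0, x))` satisfies `|f x − f y| ≤ 3 |x − y| ^ (−log₂ p)` for
all `x, y ∈ [0, 1]`; that is, `f` is `3`-Hölder with exponent `−log₂ p`. -/
theorem stmt6 (p : ℝ) (hp1 : 1 / 2 < p) (hp2 : p < 1)
    (μ : Measure ℝ)
    (hμ : ∀ n : ℕ, ∀ e : Fin n → Fin 2,
      μ (Set.Ico (∑ k : Fin n, ((e k : ℕ) : ℝ) * ((2 : ℝ) ^ ((k : ℕ) + 1))⁻¹)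
          ((∑ k : Fin n, ((e k : ℕ) : ℝ) * ((2 : ℝ) ^ ((k : ℕ) + 1))⁻¹) + ((2 : ℝ) ^ n)⁻¹))
        = ENNReal.ofReal
            (p ^ (∑ k : Fin n, (e k : ℕ)) * (1 - p) ^ (n - ∑ k : Fin n, (e k : ℕ))))
    (f : ℝ → ℝ) (hf : ∀ x, f x = (μ (Set.Ico 0 x)).toReal) :
    ∀ x ∈ Set.Icc (0 : ℝ) 1, ∀ y ∈ Set.Icc (0 : ℝ) 1,
      |f x - f y| ≤ 3 * |x - y| ^ (-(Real.log p / Real.log 2)) := by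
  set α := -(Real.log p / Real.log 2) with hαdef
  have hp0 : (0 : ℝ) < p := by linarith
  have hα : 0 < α := by
    rw [hαdef, neg_pos]
    exact div_neg_of_neg_of_pos (Real.log_neg hp0 hp2) (Real.log_pos (by norm_num))
  -- μ([0,1)) = 1
  have hone : μ (Set.Ico (0 : ℝ) 1) = 1 := by
    have h := hμ 0 (fun k => 0)
    norm_num at h
    exact h
  have hle1 : ∀ z : ℝ, z ≤ 1 → μ (Set.Ico 0 z) ≤ 1 := fun z hz =>
    hone ▸ measure_mono (Set.Ico_subset_Ico le_rfl hz)
  -- key estimate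
  have key : ∀ a b : ℝ, 0 ≤ a → a ≤ b → b ≤ 1 →
      (μ (Set.Ico a b)).toReal ≤ 3 * (b - a) ^ α := by
    intro a b ha hab hb
    rcases eq_or_lt_of_le hab with rfl | hab'
    · simp [Real.zero_rpow hα.ne']
    have hba : 0 < b - a := by linarith
    have hex : ∃ n : ℕ, ((1 : ℝ) / 2) ^ n ≤ b - a := by
      obtain ⟨n, hn⟩ := exists_pow_lt_of_lt_one hba (by norm_num : (1 : ℝ) / 2 < 1)
      exact ⟨n, hn.le⟩
    obtain ⟨n, hn, hn2⟩ : ∃ n : ℕ, ((1 : ℝ) / 2) ^ n ≤ b - a ∧ b - a < 2 * ((1 : ℝ) / 2) ^ n := by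
      refine ⟨Nat.find hex, Nat.find_spec hex, ?_⟩
      rcases Nat.eq_zero_or_pos (Nat.find hex) with h0 | h0
      · rw [h0]; norm_num; linarith
      · have hm := Nat.find_min hex (show Nat.find hex - 1 < Nat.find hex by omega)
        push_neg at hm
        obtain ⟨k, hk⟩ := Nat.exists_eq_succ_of_ne_zero (show Nat.find hex ≠ 0 by omega)
        have : ((1 : ℝ) / 2) ^ (Nat.find hex - 1) = 2 * ((1 : ℝ) / 2) ^ Nat.find hex := by
          rw [hk, Nat.succ_sub_one, pow_succ]
          ring
        linarith
    have h2n : (0 : ℝ) < 2 ^ n := by positivity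
    have hhalf : ((1 : ℝ) / 2) ^ n = ((2 : ℝ) ^ n)⁻¹ := by
      rw [div_pow, one_pow, one_div]
    set j := ⌊a * 2 ^ n⌋₊ with hj
    have hja : (j : ℝ) / 2 ^ n ≤ a := by
      rw [div_le_iff₀ h2n]
      exact Nat.floor_le (by positivity)
    have haj : a < ((j : ℝ) + 1) / 2 ^ n := by
      rw [lt_div_iff₀ h2n]
      exact Nat.lt_floor_add_one _
    have hby : b < ((j : ℝ) + 3) / 2 ^ n := by
      have : b < a + 2 * ((2 : ℝ) ^ n)⁻¹ := by rw [← hhalf]; linarith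
      have h2 : ((j : ℝ) + 1) / 2 ^ n + 2 * ((2 : ℝ) ^ n)⁻¹ = ((j : ℝ) + 3) / 2 ^ n := by
        field_simp; ring
      linarith
    -- pieces
    have piece : ∀ m : ℕ, μ (Set.Ico ((m : ℝ) / 2 ^ n) (((m : ℝ) + 1) / 2 ^ n) ∩ Set.Ico 0 1)
        ≤ ENNReal.ofReal (p ^ n) := by
      intro m
      by_cases hm : m < 2 ^ n
      · exact le_trans (measure_mono Set.inter_subset_left) (cyl_mass p hp1 hp2 μ hμ n m hm)
      · have hempty : Set.Ico ((m : ℝ) / 2 ^ n) (((m : ℝ) + 1) / 2 ^ n) ∩ Set.Ico (0:ℝ) 1 = ∅ := by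
          apply Set.eq_empty_iff_forall_notMem.mpr
          rintro z ⟨⟨hz1, _⟩, _, hz4⟩
          have hm' : (2 : ℝ) ^ n ≤ (m : ℝ) := by
            have : ((2 ^ n : ℕ) : ℝ) ≤ (m : ℝ) := Nat.cast_le.mpr (by omega)
            push_cast at this; linarith
          have : (1 : ℝ) ≤ (m : ℝ) / 2 ^ n := (one_le_div h2n).mpr hm'
          linarith
        rw [hempty]
        simp
    have hsub : Set.Ico a b ⊆
        (Set.Ico ((j : ℝ) / 2 ^ n) (((j : ℝ) + 1) / 2 ^ n) ∩ Set.Ico 0 1) ∪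
        (Set.Ico (((j : ℝ) + 1) / 2 ^ n) (((j : ℝ) + 2) / 2 ^ n) ∩ Set.Ico 0 1) ∪
        (Set.Ico (((j : ℝ) + 2) / 2 ^ n) (((j : ℝ) + 3) / 2 ^ n) ∩ Set.Ico 0 1) := by
      rintro z ⟨hz1, hz2⟩
      have hz0 : (0 : ℝ) ≤ z := le_trans ha hz1
      have hz01 : z < 1 := lt_of_lt_of_le hz2 hb
      rcases lt_or_ge z (((j : ℝ) + 1) / 2 ^ n) with h | h
      · exact Or.inl (Or.inl ⟨⟨le_trans hja hz1, h⟩, hz0, hz01⟩)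
      rcases lt_or_ge z (((j : ℝ) + 2) / 2 ^ n) with h' | h'
      · exact Or.inl (Or.inr ⟨⟨h, h'⟩, hz0, hz01⟩)
      · exact Or.inr ⟨⟨h', lt_of_lt_of_le hz2 hby.le⟩, hz0, hz01⟩
    have hmeas : μ (Set.Ico a b) ≤ ENNReal.ofReal (3 * p ^ n) := by
      calc μ (Set.Ico a b) ≤ _ := measure_mono hsub
        _ ≤ ENNReal.ofReal (p ^ n) + ENNReal.ofReal (p ^ n) + ENNReal.ofReal (p ^ n) := by
          refine le_trans (measure_union_le _ _) ?_
          refine add_le_add (le_trans (measure_union_le _ _) (add_le_add ?_ ?_)) ?_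
          · exact piece j
          · have := piece (j + 1); push_cast at this
            convert this using 4
            · rfl
            · ring
          · have := piece (j + 2); push_cast at this
            convert this using 4
            · rfl
            · ring
        _ = ENNReal.ofReal (3 * p ^ n) := by
          rw [← ENNReal.ofReal_add (by positivity) (by positivity),
            ← ENNReal.ofReal_add (by positivity) (by positivity)]
          ring_nf
    have htr : (μ (Set.Ico a b)).toReal ≤ 3 * p ^ n :=
      ENNReal.toReal_le_of_le_ofReal (by positivity) hmeas
    have hpn : p ^ n = (((1 : ℝ) / 2) ^ n) ^ α := by
      rw [← Real.rpow_natCast p n, ← Real.rpow_natCast ((1:ℝ)/2) n,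
        ← Real.rpow_mul (by norm_num : (0:ℝ) ≤ 1/2)]
      rw [Real.rpow_def_of_pos hp0, Real.rpow_def_of_pos (by norm_num : (0:ℝ) < 1/2)]
      congr 1
      rw [show Real.log (1/2) = -Real.log 2 by rw [one_div, Real.log_inv]]
      have hl2 : Real.log 2 ≠ 0 := (Real.log_pos (by norm_num)).ne'
      rw [hαdef]
      field_simp
    have hfin : (((1 : ℝ) / 2) ^ n) ^ α ≤ (b - a) ^ α :=
      Real.rpow_le_rpow (by positivity) hn hα.le
    calc (μ (Set.Ico a b)).toReal ≤ 3 * p ^ n := htr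
      _ ≤ 3 * (b - a) ^ α := by rw [hpn]; linarith
  -- splitting
  have hsplit : ∀ a b : ℝ, 0 ≤ a → a ≤ b → b ≤ 1 →
      f b - f a = (μ (Set.Ico a b)).toReal := by
    intro a b ha hab hb
    rw [hf, hf]
    have hun : μ (Set.Ico (0:ℝ) b) = μ (Set.Ico (0:ℝ) a) + μ (Set.Ico a b) := by
      rw [← Set.Ico_union_Ico_eq_Ico ha hab,
        measure_union (Set.Ico_disjoint_Ico_same) measurableSet_Ico]
    have hf1 : μ (Set.Ico (0:ℝ) a) ≠ ⊤ :=
      ne_top_of_le_ne_top ENNReal.one_ne_top (hle1 a (le_trans hab hb))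
    have hf2 : μ (Set.Ico a b) ≠ ⊤ := by
      refine ne_top_of_le_ne_top ENNReal.one_ne_top (le_trans (measure_mono ?_) (hle1 b hb))
      exact Set.Ico_subset_Ico ha le_rfl
    rw [hun, ENNReal.toReal_add hf1 hf2]
    ring
  have main : ∀ a b : ℝ, 0 ≤ a → a ≤ b → b ≤ 1 → |f a - f b| ≤ 3 * |a - b| ^ α := by
    intro a b ha hab hb
    have h1 : f a - f b = -((μ (Set.Ico a b)).toReal) := by
      rw [← hsplit a b ha hab hb]; ring
    rw [h1, abs_neg, abs_of_nonneg ENNReal.toReal_nonneg,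
      show |a - b| = b - a by rw [abs_sub_comm]; exact abs_of_nonneg (by linarith)]
    exact key a b ha hab hb
  intro x hx y hy
  rcases le_total x y with h | h
  · exact main x y hx.1 h hy.2
  · rw [abs_sub_comm, abs_sub_comm x y]
    exact main y x hy.1 h hx.2

end
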